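/- Let P be a finite p-group, R = F_p, and let I be the augmentation ideal of RP. Then the coefficient system (RP)^?/I_0 decomposes as a direct sum (RP)^?/(RP)_0 ⊕ R_0, where for an RP-module M, M_0 denotes the coefficient system with value M at the trivial subgroup and 0 elsewhere, and M^? denotes the fixed-point system. -/

import Mathlib

open CategoryTheory

universe u

variable (R : Type) [CommRing R] (G : Type) [Group G]

/-- The category of `G`-sets. -/
abbrev GSet := Action (Type) (MonCat.of G)

/-- The orbit `G/H` as a `G`-set. -/
def orbitGSet (H : Subgroup G) : GSet G := Action.ofMulAction G (G ⧸ H)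

/-- A `G`-set is an orbit if it is isomorphic to some `G/H`. -/
def IsOrbit (X : GSet G) : Prop := ∃ H : Subgroup G, Nonempty (X ≅ orbitGSet G H)

/-- The orbit category of `G`. -/
def OrbitCat := ObjectProperty.FullSubcategory (IsOrbit G)

instance : Category (OrbitCat G) := ObjectProperty.FullSubcategory.category _

/-- Coefficient systems for `G` over `R`: contravariant functors from the orbit
category of `G` to `R`-modules. -/
abbrev CoeffSystem := (OrbitCat G)ᵒᵖ ⥤ ModuleCat R

/-- The orbit `G/H` as an object of the orbit category. -/
def orbitObj (H : Subgroup G) : OrbitCat G := ⟨orbitGSet G H, H, ⟨Iso.refl _⟩⟩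

/-- Forget an orbit-category morphism to a morphism of `G`-sets. -/
def toGHom {O O' : OrbitCat G} (u : O ⟶ O') : O.obj ⟶ O'.obj := u.hom

variable {G} in
@[simp] lemma toGHom_id (O : OrbitCat G) : toGHom G (𝟙 O) = 𝟙 O.obj := rfl

variable {G} in
@[simp] lemma toGHom_comp {O O' O'' : OrbitCat G} (u : O ⟶ O') (v : O' ⟶ O'') :
    toGHom G (u ≫ v) = toGHom G u ≫ toGHom G v := rfl

/-- The coefficient system `R[X^?]`: its value on an orbit `O` is the free `R`-module
on the set of `G`-maps `O ⟶ X`, which for `O = G/K` is the fixed point set `X^K`. -/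
noncomputable def freeSystem (X : GSet G) : CoeffSystem R G where
  obj O := ModuleCat.of R ((O.unop.obj ⟶ X) →₀ R)
  map {O O'} f := ModuleCat.ofHom (Finsupp.lmapDomain R R (fun φ => toGHom G f.unop ≫ φ))
  map_id O := by
    have h : (fun φ : O.unop.obj ⟶ X => toGHom G (𝟙 O.unop) ≫ φ) = _root_.id := by
      funext φ
      simp
    show ModuleCat.ofHom (Finsupp.lmapDomain R R _) = _
    simp only [unop_id]
    rw [h, Finsupp.lmapDomain_id]
    rfl
  map_comp {O O' O''} f g := by
    have h : (fun φ : O.unop.obj ⟶ X => toGHom G (g.unop ≫ f.unop) ≫ φ)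
        = (fun φ : O'.unop.obj ⟶ X => toGHom G g.unop ≫ φ) ∘
          (fun φ : O.unop.obj ⟶ X => toGHom G f.unop ≫ φ) := by
      funext φ
      simp
    show ModuleCat.ofHom (Finsupp.lmapDomain R R _) = _
    simp only [unop_comp]
    rw [h, Finsupp.lmapDomain_comp]
    rfl

/-- The representable coefficient system `R[G/H^?]`. -/
noncomputable def orbitSystem (H : Subgroup G) : CoeffSystem R G :=
  freeSystem R G (orbitGSet G H)

/-- Evaluation of a coefficient system at a subgroup `H`, i.e. at the orbit `G/H`. -/
def evalAt (L : CoeffSystem R G) (H : Subgroup G) : ModuleCat R :=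
  L.obj (Opposite.op (orbitObj G H))

open CategoryTheory.Limits in
instance (R : Type) [CommRing R] (G : Type) [Group G] :
    HasFiniteBiproducts (CoeffSystem R G) :=
  HasFiniteBiproducts.of_hasFiniteProducts
section FixedSystems

variable {R : Type} [CommRing R] {G : Type} [Group G]
variable {V : Type} [AddCommGroup V] [Module R V]

/-- The `R`-module of `G`-equivariant maps from a `G`-set to a representation. -/
def eqvMaps (ρ : Representation R G V) (O : GSet G) : Submodule R (O.V → V) where
  carrier := {φ | ∀ (g : G) (x : O.V), φ (O.ρ g x) = ρ g (φ x)}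
  add_mem' := by intro φ ψ hφ hψ g x; simp [hφ g x, hψ g x]
  zero_mem' := by intro g x; simp
  smul_mem' := by intro c φ hφ g x; simp [hφ g x]

/-- The fixed point coefficient system `V^?` of a representation `V`:
its value on the orbit `G/H` is (the `R`-module of equivariant maps `G/H → V`,
canonically isomorphic to) the fixed point module `V^H`. -/
noncomputable def fixedSystem (ρ : Representation R G V) : CoeffSystem R G where
  obj O := ModuleCat.of R (eqvMaps ρ O.unop.obj)
  map {O O'} f := ModuleCat.ofHom
    { toFun := fun φ => ⟨φ.1 ∘ (toGHom G f.unop).hom, by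
        intro g x
        have hc : (toGHom G f.unop).hom ((O'.unop.obj).ρ g x)
            = (O.unop.obj).ρ g ((toGHom G f.unop).hom x) :=
          ConcreteCategory.congr_hom ((toGHom G f.unop).comm g) x
        simp only [Function.comp_apply]
        rw [hc]
        exact φ.2 g _⟩
      map_add' := fun φ ψ => rfl
      map_smul' := fun c φ => rfl }
  map_id O := rfl
  map_comp f g := rfl

/-- Right translation by `g` on the free orbit `G/1`, as a `G`-map. -/
def rmulHom (g : G) : orbitGSet G (⊥ : Subgroup G) ⟶ orbitGSet G (⊥ : Subgroup G) where
  hom := TypeCat.ofHom (Quotient.map' (· * g) (by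
    intro a b h
    rw [QuotientGroup.leftRel_apply] at h ⊢
    simp only [Subgroup.mem_bot] at h ⊢
    have hab : a = b := inv_mul_eq_one.mp h
    subst hab
    group))
  comm := by
    intro h
    ext x
    induction x using Quotient.inductionOn' with
    | h a =>
      exact congrArg (Quotient.mk'' (s₁ := QuotientGroup.leftRel (⊥ : Subgroup G))) (mul_assoc h a g)

/-- Right translation as a morphism of the orbit category. -/
def rmulOrbit (g : G) : orbitObj G (⊥ : Subgroup G) ⟶ orbitObj G (⊥ : Subgroup G) :=
  ObjectProperty.homMk (rmulHom g)

lemma rmulOrbit_comp (g h : G) :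
    rmulOrbit (G := G) g ≫ rmulOrbit h = rmulOrbit (g * h) := by
  apply ObjectProperty.hom_ext
  apply Action.hom_ext
  ext x
  induction x using Quotient.inductionOn' with
  | h a => show Quotient.mk'' ((a * g) * h) = Quotient.mk'' (a * (g * h)); rw [mul_assoc]

lemma rmulOrbit_one : rmulOrbit (G := G) 1 = 𝟙 _ := by
  apply ObjectProperty.hom_ext
  apply Action.hom_ext
  ext x
  induction x using Quotient.inductionOn' with
  | h a => show Quotient.mk'' (a * 1) = Quotient.mk'' a; rw [mul_one]

/-- The `RG`-module structure on `L(1)`, the evaluation of a coefficient system at the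
trivial subgroup, given by the conjugation (right translation) action. -/
noncomputable def rhoOne (L : CoeffSystem R G) : Representation R G (evalAt R G L ⊥) where
  toFun g := (L.map ((rmulOrbit g).op)).hom
  map_one' := by
    have key : L.map ((rmulOrbit (G := G) 1).op) = 𝟙 _ := by
      rw [rmulOrbit_one, op_id, L.map_id]
    exact congrArg ModuleCat.Hom.hom key
  map_mul' g h := by
    have key : L.map ((rmulOrbit (G := G) (g * h)).op)
        = L.map ((rmulOrbit h).op) ≫ L.map ((rmulOrbit g).op) := by
      rw [← L.map_comp, ← op_comp, rmulOrbit_comp]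
    exact congrArg ModuleCat.Hom.hom key

/-- The module of `RG`-linear maps `L(1) → V`. -/
noncomputable def eqvHom (ρ : Representation R G V) (L : CoeffSystem R G) :
    Submodule R (evalAt R G L ⊥ →ₗ[R] V) where
  carrier := {φ | ∀ g : G, φ.comp (rhoOne L g) = (ρ g).comp φ}
  add_mem' := by
    intro φ ψ hφ hψ g
    ext x
    have h1 := LinearMap.congr_fun (hφ g) x
    have h2 := LinearMap.congr_fun (hψ g) x
    simp only [LinearMap.comp_apply] at h1 h2
    simp [h1, h2]
  zero_mem' := by intro g; ext x; simp
  smul_mem' := by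
    intro c φ hφ g
    ext x
    have h1 := LinearMap.congr_fun (hφ g) x
    simp only [LinearMap.comp_apply] at h1
    simp [h1]

end FixedSystems

section Subsystems

variable {R : Type} [CommRing R] {G : Type} [Group G]

/-- A subsystem of a coefficient system: a submodule at each orbit, closed under the
structure maps. -/
structure Subsystem (L : CoeffSystem R G) where
  toFun : ∀ O : (OrbitCat G)ᵒᵖ, Submodule R (L.obj O)
  map_mem : ∀ {O O' : (OrbitCat G)ᵒᵖ} (f : O ⟶ O') (x : L.obj O),
    x ∈ toFun O → L.map f x ∈ toFun O'

/-- The subsystem of `R[X^?]` spanned, at each orbit `O`, by the maps `O → X` taking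
values in a subset `Y ⊆ X`; for `Y = S_A X` this is `R[(S_A X)^?]`. -/
def subFree (X : GSet G) (Y : Set X.V) : Subsystem (freeSystem R G X) where
  toFun O := Finsupp.supported R R {φ : O.unop.obj ⟶ X | ∀ o, φ.hom o ∈ Y}
  map_mem := by
    classical
    intro O O' f x hx
    refine (Finsupp.mem_supported' R _).2 ?_
    intro ψ hψ
    replace hx := (Finsupp.mem_supported R (x : (O.unop.obj ⟶ X) →₀ R)).1 hx
    show Finsupp.mapDomain (fun φ => toGHom G f.unop ≫ φ) x ψ = 0
    by_contra h0
    have hmem := Finsupp.mapDomain_support (f := fun φ => toGHom G f.unop ≫ φ)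
      (Finsupp.mem_support_iff.2 h0)
    rcases Finset.mem_image.1 hmem with ⟨φ, hφ, rfl⟩
    apply hψ
    intro o
    exact hx hφ ((toGHom G f.unop).hom o)

end Subsystems

section ZeroSystems

variable {R : Type} [CommRing R] {G : Type} [Group G]
variable {V : Type} [AddCommGroup V] [Module R V]

/-- A `G`-set is free if only the identity fixes a point. -/
def FreeGSet (X : GSet G) : Prop := ∀ (g : G) (x : X.V), X.ρ g x = x → g = 1

lemma freeGSet_of_hom {X Y : GSet G} (u : Y ⟶ X) (hX : FreeGSet X) : FreeGSet Y := by
  intro g y hg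
  refine hX g (u.hom y) ?_
  have hc : u.hom (Y.ρ g y) = X.ρ g (u.hom y) := ConcreteCategory.congr_hom (u.comm g) y
  rw [← hc, hg]

/-- The subsystem `W_0` of the fixed point system `V^?`: it has value (the equivariant
maps with values in) `W` at the trivial subgroup (i.e. on free orbits) and `0` at all
nontrivial subgroups. For `W = ⊤` this is `V_0` and for the augmentation ideal it is
`I_0`. -/
noncomputable def zeroSub (ρ : Representation R G V) (W : Submodule R V) : Subsystem (fixedSystem ρ) where
  toFun O :=
    { carrier := {φ | (∀ x, (φ : eqvMaps ρ O.unop.obj).1 x ∈ W) ∧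
        (¬ FreeGSet O.unop.obj → φ = 0)}
      add_mem' := by
        rintro φ ψ ⟨hφ1, hφ2⟩ ⟨hψ1, hψ2⟩
        refine ⟨fun x => W.add_mem (hφ1 x) (hψ1 x), fun h => by rw [hφ2 h, hψ2 h, add_zero]⟩
      zero_mem' := ⟨fun x => W.zero_mem, fun _ => rfl⟩
      smul_mem' := by
        rintro c φ ⟨hφ1, hφ2⟩
        refine ⟨fun x => W.smul_mem c (hφ1 x), fun h => by rw [hφ2 h, smul_zero]⟩ }
  map_mem := by
    rintro O O' f φ ⟨h1, h2⟩
    constructor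
    · intro x
      exact h1 _
    · intro hO'
      by_cases hO : FreeGSet O.unop.obj
      · exact absurd (freeGSet_of_hom (toGHom G f.unop) hO) hO'
      · rw [h2 hO]
        exact map_zero _
end ZeroSystems

section SubsystemCat

variable {R : Type} [CommRing R] {G : Type} [Group G]

/-- A subsystem as a coefficient system in its own right. -/
noncomputable def Subsystem.toSystem {L : CoeffSystem R G} (S : Subsystem L) :
    CoeffSystem R G where
  obj O := ModuleCat.of R (S.toFun O)
  map {O O'} f := ModuleCat.ofHom ((L.map f).hom.restrict (fun x hx => S.map_mem f x hx))
  map_id O := by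
    ext x
    show L.map (𝟙 O) x.1 = x.1
    rw [L.map_id]
    rfl
  map_comp {O O' O''} f g := by
    ext x
    show L.map (f ≫ g) x.1 = L.map g (L.map f x.1)
    rw [L.map_comp]
    rfl

/-- The inclusion of a subsystem. -/
noncomputable def Subsystem.incl {L : CoeffSystem R G} (S : Subsystem L) :
    S.toSystem ⟶ L where
  app O := ModuleCat.ofHom (S.toFun O).subtype
  naturality O O' f := rfl

/-- The morphism of systems induced by an inclusion of subsystems. -/
noncomputable def Subsystem.homOfLe {L : CoeffSystem R G} {S T : Subsystem L}
    (h : ∀ O, S.toFun O ≤ T.toFun O) : S.toSystem ⟶ T.toSystem where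
  app O := ModuleCat.ofHom (Submodule.inclusion (h O))
  naturality O O' f := rfl

end SubsystemCat

section QuotSystems

open CategoryTheory.Limits

variable {R : Type} [CommRing R] {G : Type} [Group G]

/-- The quotient system `L / S`. -/
noncomputable def Subsystem.quot {L : CoeffSystem R G} (S : Subsystem L) :
    CoeffSystem R G where
  obj O := ModuleCat.of R (L.obj O ⧸ S.toFun O)
  map {O O'} f := ModuleCat.ofHom (Submodule.mapQ _ _ (L.map f).hom (fun x hx => S.map_mem f x hx))
  map_id O := by
    apply ModuleCat.hom_ext
    apply Submodule.linearMap_qext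
    ext x
    show Submodule.Quotient.mk (L.map (𝟙 O) x) = Submodule.Quotient.mk x
    rw [L.map_id]
    rfl
  map_comp {O O' O''} f g := by
    apply ModuleCat.hom_ext
    apply Submodule.linearMap_qext
    ext x
    show Submodule.Quotient.mk (L.map (f ≫ g) x)
      = Submodule.Quotient.mk (L.map g (L.map f x))
    rw [L.map_comp]
    rfl

/-- The projection onto the quotient system. -/
noncomputable def Subsystem.quotπ {L : CoeffSystem R G} (S : Subsystem L) :
    L ⟶ S.quot where
  app O := ModuleCat.ofHom (S.toFun O).mkQ
  naturality O O' f := rfl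

/-- The cokernel of a morphism whose objectwise range is a subsystem `S` is the
quotient system `L / S`. -/
noncomputable def cokernelIsoQuot {M L : CoeffSystem R G} (f : M ⟶ L) (S : Subsystem L)
    (hr : ∀ O, LinearMap.range (f.app O).hom = S.toFun O) : cokernel f ≅ S.quot := by
  have hw : f ≫ S.quotπ = 0 := by
    ext O x
    exact (Submodule.Quotient.mk_eq_zero _).2 ((hr O) ▸ LinearMap.mem_range_self _ x)
  have hker : ∀ O, S.toFun O ≤ LinearMap.ker ((cokernel.π f).app O).hom := by
    intro O x hx
    rw [← hr O] at hx
    obtain ⟨y, rfl⟩ := hx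
    have h := NatTrans.congr_app (cokernel.condition f) O
    simp only [NatTrans.comp_app, zero_app] at h
    exact ConcreteCategory.congr_hom h y
  refine ⟨cokernel.desc f S.quotπ hw,
    { app := fun O => ModuleCat.ofHom (Submodule.liftQ _ ((cokernel.π f).app O).hom (hker O))
      naturality := ?_ }, ?_, ?_⟩
  · intro O O' u
    apply ModuleCat.hom_ext
    apply Submodule.linearMap_qext
    ext x
    show (cokernel.π f).app O' (L.map u x) = (cokernel f).map u ((cokernel.π f).app O x)
    exact ConcreteCategory.congr_hom ((cokernel.π f).naturality u) x
  · apply coequalizer.hom_ext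
    ext O x
    show _ = (cokernel.π f).app O x
    have h1 : (cokernel.π f ≫ cokernel.desc f S.quotπ hw) = S.quotπ := cokernel.π_desc f _ hw
    have h2 := ConcreteCategory.congr_hom (NatTrans.congr_app h1 O) x
    show Submodule.liftQ _ ((cokernel.π f).app O).hom (hker O)
        ((cokernel.desc f S.quotπ hw).app O ((cokernel.π f).app O x)) = _
    rw [show (cokernel.desc f S.quotπ hw).app O ((cokernel.π f).app O x)
        = Submodule.Quotient.mk x from h2]
    rfl
  · ext O x
    obtain ⟨x, rfl⟩ := Submodule.mkQ_surjective _ x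
    show (cokernel.desc f S.quotπ hw).app O ((cokernel.π f).app O x)
      = Submodule.Quotient.mk x
    exact ConcreteCategory.congr_hom (NatTrans.congr_app (cokernel.π_desc f S.quotπ hw) O) x

end QuotSystems
section PGroupFacts

open Finsupp

/-- The coset decomposition equivalence `(P ⧸ H) × H ≃ P`. -/
noncomputable def cosetEquiv {P : Type} [Group P] (H : Subgroup P) : (P ⧸ H) × H ≃ P where
  toFun qh := Quotient.out qh.1 * qh.2.1
  invFun x := (QuotientGroup.mk x,
    ⟨(Quotient.out (QuotientGroup.mk (s := H) x))⁻¹ * x, by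
      rw [← QuotientGroup.eq]
      exact Quotient.out_eq _⟩)
  left_inv := by
    rintro ⟨q, h, hh⟩
    have hmk : QuotientGroup.mk (s := H) (Quotient.out q * h) = q := by
      rw [QuotientGroup.mk_mul_of_mem _ hh]
      exact Quotient.out_eq _
    refine Prod.ext hmk ?_
    apply Subtype.ext
    show (Quotient.out (QuotientGroup.mk (s := H) (Quotient.out q * h)))⁻¹ *
      (Quotient.out q * h) = h
    rw [hmk, inv_mul_cancel_left]
  right_inv := fun x => mul_inv_cancel_left _ _

/-- If a vector in `F_p[P]` is fixed by a nontrivial element of a finite `p`-group,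
its augmentation is zero. -/
lemma aug_eq_zero_of_fixed (p : ℕ) [Fact p.Prime] {P : Type} [Group P] [Fintype P]
    (hP : IsPGroup p P) {g : P} (hg : g ≠ 1) {v : P →₀ ZMod p}
    (hv : MonoidAlgebra.coeffLinearEquiv (ZMod p) (Representation.ofMulAction (ZMod p) P P g
      ((MonoidAlgebra.coeffLinearEquiv (ZMod p)).symm v)) = v) :
    Finsupp.linearCombination (ZMod p) (fun _ : P => (1 : ZMod p)) v = 0 := by
  classical
  -- step 1: invariance under left multiplication by elements of ⟨g⟩
  have hstep : ∀ a : P, v (g * a) = v a := by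
    intro a
    have h1 : Finsupp.mapDomain (fun x => g • x) v (g • a) = v a :=
      Finsupp.mapDomain_apply (MulAction.injective g) v a
    have h2 : MonoidAlgebra.coeffLinearEquiv (ZMod p) (((Representation.ofMulAction (ZMod p) P P) g)
        ((MonoidAlgebra.coeffLinearEquiv (ZMod p)).symm v))
        = Finsupp.mapDomain (fun x => g • x) v := by
      rfl
    calc v (g * a) = (MonoidAlgebra.coeffLinearEquiv (ZMod p) (((Representation.ofMulAction (ZMod p) P P) g)
        ((MonoidAlgebra.coeffLinearEquiv (ZMod p)).symm v))) (g * a) := by rw [hv]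
      _ = v a := by rw [h2]; exact h1
  set K : Subgroup P :=
    { carrier := {h : P | ∀ a : P, v (h * a) = v a}
      one_mem' := by intro a; rw [one_mul]
      mul_mem' := by
        intro h1 h2 hh1 hh2 a
        rw [mul_assoc, hh1 (h2 * a), hh2 a]
      inv_mem' := by
        intro h hh a
        have := hh (h⁻¹ * a)
        rw [mul_inv_cancel_left] at this
        exact this.symm } with hK
  have hginK : g ∈ K := hstep
  have hinv : ∀ h ∈ Subgroup.zpowers g, ∀ a : P, v (h * a) = v a :=
    fun h hh => Subgroup.zpowers_le.2 hginK hh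
  -- step 2: augmentation as a sum
  rw [Finsupp.linearCombination_apply, Finsupp.sum_fintype _ _ (by intro i; simp)]
  simp only [smul_eq_mul, mul_one]
  -- step 3: reindex the sum by inversion, then by cosets
  set H := Subgroup.zpowers g with hH
  have hw : ∀ (x : P) (h : P), h ∈ H → v ((x * h)⁻¹) = v x⁻¹ := by
    intro x h hh
    rw [mul_inv_rev]
    have := hinv h⁻¹ (H.inv_mem hh) x⁻¹
    rw [this]
  have hsum : ∑ x : P, v x = ∑ x : P, v x⁻¹ :=
    Fintype.sum_equiv (Equiv.inv P) _ _ (by intro x; simp)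
  rw [hsum]
  have hsum2 : ∑ x : P, v x⁻¹ = ∑ qh : (P ⧸ H) × H, v ((Quotient.out qh.1 * qh.2.1)⁻¹) :=
    (Fintype.sum_equiv (cosetEquiv H) (fun qh => v ((Quotient.out qh.1 * qh.2.1)⁻¹))
      (fun x => v x⁻¹) (by intro qh; rfl)).symm
  rw [hsum2, Fintype.sum_prod_type]
  have hconst : ∀ q : P ⧸ H, ∑ h : H, v ((Quotient.out q * h.1)⁻¹)
      = Fintype.card H • v (Quotient.out q)⁻¹ := by
    intro q
    rw [Finset.sum_congr rfl (fun (h : H) _ => hw _ h.1 h.2), Finset.sum_const,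
      Finset.card_univ]
  have hcard : (Fintype.card H : ZMod p) = 0 := by
    have h1 : Fintype.card H = orderOf g := by
      rw [← Nat.card_eq_fintype_card, Nat.card_zpowers]
    obtain ⟨k, hk⟩ := (IsPGroup.iff_orderOf.mp hP) g
    have hk0 : k ≠ 0 := by
      rintro rfl
      exact hg (orderOf_eq_one_iff.mp (by simpa using hk))
    rw [h1, hk]
    exact_mod_cast (ZMod.natCast_eq_zero_iff _ p).2 (dvd_pow_self p hk0)
  have : ∀ q : P ⧸ H, ∑ h : H, v ((Quotient.out q * h.1)⁻¹) = 0 := by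
    intro q
    rw [hconst q, nsmul_eq_mul, hcard, zero_mul]
  rw [Finset.sum_congr rfl (fun q _ => this q), Finset.sum_const, smul_zero]

end PGroupFacts
section OrbitFacts

variable {G : Type} [Group G]

/-- Orbits are transitive. -/
lemma orbit_transitive {X : GSet G} (hX : IsOrbit G X) (x y : X.V) :
    ∃ a : G, X.ρ a x = y := by
  obtain ⟨H, ⟨e⟩⟩ := hX
  have hretr : ∀ z : X.V, e.inv.hom (e.hom.hom z) = z := by
    intro z
    have := congrArg (fun (u : X ⟶ X) => u.hom) e.hom_inv_id
    exact ConcreteCategory.congr_hom this z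
  obtain ⟨a, ha⟩ := Quotient.exists_rep (e.hom.hom x)
  obtain ⟨b, hb⟩ := Quotient.exists_rep (e.hom.hom y)
  refine ⟨b * a⁻¹, ?_⟩
  have hcomm : ∀ (g : G) (z : X.V),
      e.hom.hom (X.ρ g z) = (orbitGSet G H).ρ g (e.hom.hom z) := by
    intro g z
    exact ConcreteCategory.congr_hom (e.hom.comm g) z
  have h1 : e.hom.hom (X.ρ (b * a⁻¹) x) = e.hom.hom y := by
    rw [hcomm, ← ha, ← hb]
    show Quotient.mk _ ((b * a⁻¹) * a) = Quotient.mk _ b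
    rw [inv_mul_cancel_right]
  have := congrArg e.inv.hom h1
  rwa [hretr, hretr] at this

/-- Every point of a non-free orbit has a nontrivial stabilizer element. -/
lemma exists_fixer {X : GSet G} (hX : IsOrbit G X) (hnf : ¬ FreeGSet X) (x : X.V) :
    ∃ g : G, g ≠ 1 ∧ X.ρ g x = x := by
  rw [FreeGSet] at hnf
  push_neg at hnf
  obtain ⟨g₀, x₀, hfix, hg₀⟩ := hnf
  obtain ⟨a, ha⟩ := orbit_transitive hX x₀ x
  refine ⟨a * g₀ * a⁻¹, by simpa using hg₀, ?_⟩
  have hmul : ∀ (g h : G) (z : X.V), X.ρ (g * h) z = X.ρ g (X.ρ h z) := by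
    intro g h z
    rw [map_mul]
    rfl
  rw [← ha, ← hmul]
  rw [show a * g₀ * a⁻¹ * a = a * g₀ by group]
  rw [hmul, hfix]

end OrbitFacts

section KeyFact

/-- In a finite `p`-group, every equivariant map from a non-free orbit into the regular
representation over `F_p` takes values in the augmentation ideal. -/
lemma values_in_aug (p : ℕ) [Fact p.Prime] {P : Type} [Group P] [Fintype P]
    (hP : IsPGroup p P) (O : OrbitCat P) (hnf : ¬ FreeGSet O.obj)
    (φ : eqvMaps (Representation.ofMulAction (ZMod p) P P) O.obj) (x : O.obj.V) :
    φ.1 x ∈ LinearMap.ker ((Finsupp.linearCombination (ZMod p) (fun _ : P => (1 : ZMod p))).comp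
      (MonoidAlgebra.coeffLinearEquiv (ZMod p)).toLinearMap) := by
  obtain ⟨g, hg, hfix⟩ := exists_fixer O.property hnf x
  have hv : Representation.ofMulAction (ZMod p) P P g (φ.1 x) = φ.1 x := by
    rw [← φ.2 g x, hfix]
  exact aug_eq_zero_of_fixed p hP hg (v := MonoidAlgebra.coeffLinearEquiv (ZMod p) (φ.1 x))
    (by rw [LinearEquiv.symm_apply_apply, hv])

end KeyFact
section Decomposition

open CategoryTheory.Limits

attribute [local instance] Classical.propDecidable

variable {R : Type} [CommRing R] {G : Type} [Group G]
variable {V : Type} [AddCommGroup V] [Module R V]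
variable (ρ : Representation R G V) (W : Submodule R V)

/-- The subsystem of `(zeroSub ρ ⊤).toSystem` corresponding to `zeroSub ρ W`. -/
noncomputable def comapSub : Subsystem ((zeroSub ρ (⊤ : Submodule R V)).toSystem) where
  toFun O := Submodule.comap ((zeroSub ρ (⊤ : Submodule R V)).toFun O).subtype
    ((zeroSub ρ W).toFun O)
  map_mem := fun {O O'} f x hx => (zeroSub ρ W).map_mem f x.1 hx

/-- The projection `(V^?)/W_0 ⟶ (V^?)/V_0`. -/
noncomputable def pi2 : (zeroSub ρ W).quot ⟶ (zeroSub ρ (⊤ : Submodule R V)).quot where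
  app O := ModuleCat.ofHom (Submodule.mapQ _ _ LinearMap.id
    (fun φ hφ => ⟨fun _ => Submodule.mem_top, hφ.2⟩))
  naturality O O' f := by
    apply ModuleCat.hom_ext
    apply Submodule.linearMap_qext
    rfl

variable {ρ W} in
/-- The splitting `(V^?)/V_0 ⟶ (V^?)/W_0`, using the key hypothesis. -/
noncomputable def iota2
    (hkey : ∀ O : OrbitCat G, ¬ FreeGSet O.obj →
      ∀ (φ : eqvMaps ρ O.obj) (x : O.obj.V), φ.1 x ∈ W) :
    (zeroSub ρ (⊤ : Submodule R V)).quot ⟶ (zeroSub ρ W).quot where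
  app O :=
    if h : FreeGSet O.unop.obj then 0
    else ModuleCat.ofHom (Submodule.mapQ _ _ LinearMap.id
      (fun φ hφ => by rw [hφ.2 h]; exact Submodule.zero_mem _))
  naturality O O' f := by
    beta_reduce
    by_cases hO : FreeGSet O.unop.obj
    · have hO' : FreeGSet O'.unop.obj := freeGSet_of_hom (toGHom G f.unop) hO
      erw [dif_pos hO, dif_pos hO']
      simp
    · by_cases hO' : FreeGSet O'.unop.obj
      · erw [dif_neg hO, dif_pos hO']
        apply ModuleCat.hom_ext
        apply Submodule.linearMap_qext
        ext φ
        show (0 : _) = ((zeroSub ρ W).quot.map f) (Submodule.Quotient.mk φ)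
        show (0 : _) = Submodule.Quotient.mk ((fixedSystem ρ).map f φ)
        refine ((Submodule.Quotient.mk_eq_zero _).2 ?_).symm
        exact ⟨fun x => hkey O.unop hO φ _, fun hn => absurd hO' hn⟩
      · erw [dif_neg hO, dif_neg hO']
        apply ModuleCat.hom_ext
        apply Submodule.linearMap_qext
        rfl

/-- The inclusion of a fiber of `zeroSub ρ ⊤` over a free orbit. -/
noncomputable def toTopSub (O : (OrbitCat G)ᵒᵖ) (h : FreeGSet O.unop.obj) :
    (fixedSystem ρ).obj O →ₗ[R] ((zeroSub ρ (⊤ : Submodule R V)).toFun O) where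
  toFun φ := ⟨φ, fun _ => Submodule.mem_top, fun hn => absurd h hn⟩
  map_add' _ _ := rfl
  map_smul' _ _ := rfl

variable {ρ W} in
/-- The projection `(V^?)/W_0 ⟶ V_0/W_0`, using the key hypothesis. -/
noncomputable def pi3
    (hkey : ∀ O : OrbitCat G, ¬ FreeGSet O.obj →
      ∀ (φ : eqvMaps ρ O.obj) (x : O.obj.V), φ.1 x ∈ W) :
    (zeroSub ρ W).quot ⟶ (comapSub ρ W).quot where
  app O :=
    if h : FreeGSet O.unop.obj then
      ModuleCat.ofHom (Submodule.liftQ _ (((comapSub ρ W).toFun O).mkQ.comp (toTopSub ρ O h))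
        (fun φ hφ => (Submodule.Quotient.mk_eq_zero _).2 hφ))
    else 0
  naturality O O' f := by
    beta_reduce
    by_cases hO : FreeGSet O.unop.obj
    · have hO' : FreeGSet O'.unop.obj := freeGSet_of_hom (toGHom G f.unop) hO
      erw [dif_pos hO, dif_pos hO']
      apply ModuleCat.hom_ext
      apply Submodule.linearMap_qext
      rfl
    · by_cases hO' : FreeGSet O'.unop.obj
      · erw [dif_neg hO, dif_pos hO']
        apply ModuleCat.hom_ext
        apply Submodule.linearMap_qext
        ext φ
        show Submodule.Quotient.mk (toTopSub ρ O' hO' ((fixedSystem ρ).map f φ)) = (0 : _)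
        refine (Submodule.Quotient.mk_eq_zero _).2 ?_
        show ((fixedSystem ρ).map f φ : _) ∈ (zeroSub ρ W).toFun O'
        exact ⟨fun x => hkey O.unop hO φ _, fun hn => absurd hO' hn⟩
      · erw [dif_neg hO, dif_neg hO']
        simp

/-- The inclusion `V_0/W_0 ⟶ (V^?)/W_0`. -/
noncomputable def iota3 : (comapSub ρ W).quot ⟶ (zeroSub ρ W).quot where
  app O := ModuleCat.ofHom (Submodule.liftQ _
    (((zeroSub ρ W).toFun O).mkQ.comp ((zeroSub ρ (⊤ : Submodule R V)).toFun O).subtype)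
    (fun x hx => (Submodule.Quotient.mk_eq_zero _).2 hx))
  naturality O O' f := by
    apply ModuleCat.hom_ext
    apply Submodule.linearMap_qext
    rfl

end Decomposition
section Identities

open CategoryTheory.Limits

attribute [local instance] Classical.propDecidable

variable {R : Type} [CommRing R] {G : Type} [Group G]
variable {V : Type} [AddCommGroup V] [Module R V]
variable {ρ : Representation R G V} {W : Submodule R V}
variable (hkey : ∀ O : OrbitCat G, ¬ FreeGSet O.obj →
      ∀ (φ : eqvMaps ρ O.obj) (x : O.obj.V), φ.1 x ∈ W)

lemma iota2_app_free {O : (OrbitCat G)ᵒᵖ} (h : FreeGSet O.unop.obj) :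
    (iota2 hkey).app O = 0 := by
  simp only [iota2]
  exact dif_pos h

lemma iota2_app_mk {O : (OrbitCat G)ᵒᵖ} (h : ¬ FreeGSet O.unop.obj)
    (φ : (fixedSystem ρ).obj O) :
    (iota2 hkey).app O (Submodule.Quotient.mk φ) = Submodule.Quotient.mk φ := by
  simp only [iota2]
  erw [dif_neg h]
  rfl

lemma pi3_app_free {O : (OrbitCat G)ᵒᵖ} (h : FreeGSet O.unop.obj)
    (φ : (fixedSystem ρ).obj O) :
    (pi3 hkey).app O (Submodule.Quotient.mk φ)
      = Submodule.Quotient.mk (toTopSub ρ O h φ) := by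
  simp only [pi3]
  erw [dif_pos h]
  rfl

lemma pi3_app_nonfree {O : (OrbitCat G)ᵒᵖ} (h : ¬ FreeGSet O.unop.obj) :
    (pi3 hkey).app O = 0 := by
  simp only [pi3]
  exact dif_neg h

lemma pi2_app_mk {O : (OrbitCat G)ᵒᵖ} (φ : (fixedSystem ρ).obj O) :
    (pi2 ρ W).app O (Submodule.Quotient.mk φ) = Submodule.Quotient.mk φ := rfl

lemma iota3_app_mk {O : (OrbitCat G)ᵒᵖ}
    (x : ((zeroSub ρ (⊤ : Submodule R V)).toFun O)) :
    (iota3 ρ W).app O (Submodule.Quotient.mk x) = Submodule.Quotient.mk x.1 := rfl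

lemma mkQ2_eq_zero {O : (OrbitCat G)ᵒᵖ} (h : FreeGSet O.unop.obj)
    (φ : (fixedSystem ρ).obj O) :
    (Submodule.Quotient.mk (p := (zeroSub ρ (⊤ : Submodule R V)).toFun O) φ) = 0 :=
  (Submodule.Quotient.mk_eq_zero _).2 ⟨fun _ => Submodule.mem_top, fun hn => absurd h hn⟩

lemma iota2_pi2 : iota2 hkey ≫ pi2 ρ W = 𝟙 _ := by
  apply NatTrans.ext
  funext O
  simp only [NatTrans.comp_app, NatTrans.id_app]
  apply ModuleCat.hom_ext
  apply Submodule.linearMap_qext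
  ext φ
  show (pi2 ρ W).app O ((iota2 hkey).app O (Submodule.Quotient.mk φ))
    = Submodule.Quotient.mk φ
  by_cases h : FreeGSet O.unop.obj
  · rw [iota2_app_free hkey h]
    show (pi2 ρ W).app O 0 = _
    rw [map_zero, mkQ2_eq_zero h]
    rfl
  · rw [iota2_app_mk hkey h, pi2_app_mk]

lemma iota2_pi3 : iota2 hkey ≫ pi3 hkey = 0 := by
  apply NatTrans.ext
  funext O
  simp only [NatTrans.comp_app, zero_app]
  apply ModuleCat.hom_ext
  apply Submodule.linearMap_qext
  ext φ
  show (pi3 hkey).app O ((iota2 hkey).app O (Submodule.Quotient.mk φ)) = 0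
  by_cases h : FreeGSet O.unop.obj
  · rw [iota2_app_free hkey h]
    show (pi3 hkey).app O 0 = _
    rw [map_zero]
  · rw [iota2_app_mk hkey h, pi3_app_nonfree hkey h]
    rfl

lemma iota3_pi2 : iota3 ρ W ≫ pi2 ρ W = 0 := by
  apply NatTrans.ext
  funext O
  simp only [NatTrans.comp_app, zero_app]
  apply ModuleCat.hom_ext
  apply Submodule.linearMap_qext
  ext x
  show (pi2 ρ W).app O ((iota3 ρ W).app O (Submodule.Quotient.mk x)) = 0
  show Submodule.Quotient.mk (p := (zeroSub ρ (⊤ : Submodule R V)).toFun O) x.1 = 0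
  exact (Submodule.Quotient.mk_eq_zero _).2 x.2

lemma iota3_pi3 : iota3 ρ W ≫ pi3 hkey = 𝟙 _ := by
  apply NatTrans.ext
  funext O
  simp only [NatTrans.comp_app, NatTrans.id_app]
  apply ModuleCat.hom_ext
  apply Submodule.linearMap_qext
  ext x
  show (pi3 hkey).app O ((iota3 ρ W).app O (Submodule.Quotient.mk x))
    = Submodule.Quotient.mk x
  erw [iota3_app_mk]
  by_cases h : FreeGSet O.unop.obj
  · rw [pi3_app_free hkey h]
    rfl
  · rw [pi3_app_nonfree hkey h]
    have hx0 : x.1 = 0 := x.2.2 h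
    have hz : Submodule.Quotient.mk (p := (comapSub ρ W).toFun O) x = 0 :=
      (Submodule.Quotient.mk_eq_zero _).2 (by
        show x.1 ∈ (zeroSub ρ W).toFun O
        rw [hx0]
        exact Submodule.zero_mem _)
    rw [hz]
    rfl

lemma sum_identity : pi2 ρ W ≫ iota2 hkey + pi3 hkey ≫ iota3 ρ W = 𝟙 _ := by
  apply NatTrans.ext
  funext O
  simp only [NatTrans.app_add, NatTrans.comp_app, NatTrans.id_app]
  apply ModuleCat.hom_ext
  apply Submodule.linearMap_qext
  ext φ
  show (iota2 hkey).app O ((pi2 ρ W).app O (Submodule.Quotient.mk φ))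
      + (iota3 ρ W).app O ((pi3 hkey).app O (Submodule.Quotient.mk φ))
    = Submodule.Quotient.mk φ
  by_cases h : FreeGSet O.unop.obj
  · erw [pi2_app_mk, mkQ2_eq_zero h, map_zero, pi3_app_free hkey h, iota3_app_mk]
    erw [zero_add]
    rfl
  · erw [pi2_app_mk, iota2_app_mk hkey h, pi3_app_nonfree hkey h]
    exact add_zero _

/-- The decomposition `(V^?)/W_0 ≅ (V^?)/V_0 ⊞ V_0/W_0`. -/
noncomputable def decompIso :
    (zeroSub ρ W).quot ≅ (zeroSub ρ (⊤ : Submodule R V)).quot ⊞ (comapSub ρ W).quot where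
  hom := biprod.lift (pi2 ρ W) (pi3 hkey)
  inv := biprod.desc (iota2 hkey) (iota3 ρ W)
  hom_inv_id := by rw [biprod.lift_desc, sum_identity]
  inv_hom_id := by
    apply biprod.hom_ext' <;> apply biprod.hom_ext <;>
      simp [iota2_pi2 hkey, iota2_pi3 hkey, iota3_pi2 (ρ := ρ) (W := W),
        iota3_pi3 hkey]

end Identities
open CategoryTheory.Limits in
/-- for a finite `p`-group `P` over `R = F_p`, with `I` the augmentation
ideal of `RP`, the coefficient system `(RP)^?/I_0` decomposes as
`(RP)^?/(RP)_0 ⊕ R_0`, where `R_0 = (RP)_0/I_0`. -/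
theorem quotient_by_I0_decomposition (p : ℕ) [Fact p.Prime] (P : Type) [Group P]
    [Fintype P] (hP : IsPGroup p P) :
    Nonempty
      ((cokernel (Subsystem.incl (zeroSub (Representation.ofMulAction (ZMod p) P P)
          (LinearMap.ker ((Finsupp.linearCombination (ZMod p) (fun _ : P => (1 : ZMod p))).comp
            (MonoidAlgebra.coeffLinearEquiv (ZMod p)).toLinearMap))))) ≅
        (cokernel (Subsystem.incl (zeroSub (Representation.ofMulAction (ZMod p) P P)
          (⊤ : Submodule (ZMod p) (MonoidAlgebra (ZMod p) P))))) ⊞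
        (cokernel (Subsystem.homOfLe
          (S := zeroSub (Representation.ofMulAction (ZMod p) P P)
            (LinearMap.ker ((Finsupp.linearCombination (ZMod p) (fun _ : P => (1 : ZMod p))).comp
            (MonoidAlgebra.coeffLinearEquiv (ZMod p)).toLinearMap)))
          (T := zeroSub (Representation.ofMulAction (ZMod p) P P)
            (⊤ : Submodule (ZMod p) (MonoidAlgebra (ZMod p) P)))
          (fun O => fun φ hφ => ⟨fun x => Submodule.mem_top, hφ.2⟩)))) := by
  set ρ := Representation.ofMulAction (ZMod p) P P
  set W := LinearMap.ker ((Finsupp.linearCombination (ZMod p) (fun _ : P => (1 : ZMod p))).comp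
    (MonoidAlgebra.coeffLinearEquiv (ZMod p)).toLinearMap)
  have hkey : ∀ O : OrbitCat P, ¬ FreeGSet O.obj →
      ∀ (φ : eqvMaps ρ O.obj) (x : O.obj.V), φ.1 x ∈ W :=
    fun O hnf φ x => values_in_aug p hP O hnf φ x
  have e1 := cokernelIsoQuot (Subsystem.incl (zeroSub ρ W)) (zeroSub ρ W)
    (fun O => Submodule.range_subtype _)
  have e2 := cokernelIsoQuot
    (Subsystem.incl (zeroSub ρ (⊤ : Submodule (ZMod p) (MonoidAlgebra (ZMod p) P))))
    (zeroSub ρ (⊤ : Submodule (ZMod p) (MonoidAlgebra (ZMod p) P)))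
    (fun O => Submodule.range_subtype _)
  have e3 := cokernelIsoQuot
    (Subsystem.homOfLe (S := zeroSub ρ W)
      (T := zeroSub ρ (⊤ : Submodule (ZMod p) (MonoidAlgebra (ZMod p) P)))
      (fun O => fun φ hφ => ⟨fun x => Submodule.mem_top, hφ.2⟩))
    (comapSub ρ W)
    (fun O => Submodule.range_inclusion ((zeroSub ρ W).toFun O)
      ((zeroSub ρ (⊤ : Submodule (ZMod p) (MonoidAlgebra (ZMod p) P))).toFun O)
      (fun φ hφ => ⟨fun x => Submodule.mem_top, hφ.2⟩))
  exact ⟨e1 ≪≫ decompIso hkey ≪≫ biprod.mapIso e2.symm e3.symm⟩
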